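/- arXiv:2405.11700 — 2 statements merged into one kernel-verified Lean document; each statement's English description precedes it below -/
import Mathlib

section
/- Let c : (0,1) → ℝ be continuous with c(x) ≤ π² for all x and c not identically equal to π². Then the first eigenvalue of the operator −(u'' + c·u) with Dirichlet conditions on (0,1) is strictly positive, i.e., inf { ∫₀¹ (u')² − ∫₀¹ c u² : u ∈ H¹₀(0,1), ∫₀¹ u² = 1 } > 0. -/
open MeasureTheory


open MeasureTheory

/-- Rayleigh-type spectrum set for the operator -(u'' + c·u) on (0,a) with
Dirichlet boundary conditions: values of ∫ (u')² − ∫ c u² over normalized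
admissible functions. -/
noncomputable def rayleighSet1D (a : ℝ) (c : ℝ → ℝ) : Set ℝ :=
  {r : ℝ | ∃ u : ℝ → ℝ, ContDiff ℝ 1 u ∧ u 0 = 0 ∧ u a = 0 ∧
    (∫ x in (0:ℝ)..a, (u x)^2) = 1 ∧
    r = (∫ x in (0:ℝ)..a, (deriv u x)^2) - ∫ x in (0:ℝ)..a, c x * (u x)^2}

set_option maxHeartbeats 1000000

open Real Set intervalIntegral Filter

set_option maxHeartbeats 1000000

lemma wirtinger {a b : ℝ} (hab : a < b) (u : ℝ → ℝ) (hu : ContDiff ℝ 1 u)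
    (ha : u a = 0) (hb : u b = 0) :
    (π / (b - a))^2 * ∫ x in a..b, (u x)^2 ≤ ∫ x in a..b, (deriv u x)^2 := by
  have hL : (0:ℝ) < b - a := by linarith
  set L := b - a with hLdef
  set k := π / L with hkdef
  have hk : 0 < k := div_pos pi_pos hL
  have hkL : k * L = π := by rw [hkdef]; exact div_mul_cancel₀ π hL.ne'
  have hUc : Continuous u := hu.continuous
  have hU'c : Continuous (deriv u) := hu.continuous_deriv le_rfl
  -- bound on deriv u
  obtain ⟨C, hC⟩ := (isCompact_Icc (a := a) (b := b)).exists_bound_of_continuousOn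
    hU'c.continuousOn
  have hC0 : 0 ≤ C := le_trans (norm_nonneg _) (hC a (left_mem_Icc.2 hab.le))
  have hderivIn : ∀ x ∈ Icc a b, HasDerivWithinAt u (deriv u x) (Icc a b) x := fun x _ =>
    ((hu.differentiable one_ne_zero).differentiableAt.hasDerivAt).hasDerivWithinAt
  have hMVTa : ∀ x ∈ Icc a b, |u x| ≤ C * (x - a) := by
    intro x hx
    have := norm_image_sub_le_of_norm_deriv_le_segment' hderivIn
      (fun y hy => hC y (Ico_subset_Icc_self hy)) x hx
    simpa [ha] using this
  have hMVTb : ∀ x ∈ Icc a b, |u x| ≤ C * (b - x) := by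
    intro x hx
    have hder : ∀ y ∈ Icc a b, HasDerivWithinAt (fun t => u (a + b - t)) (-(deriv u (a + b - y))) (Icc a b) y := by
      intro y hy
      have h1 : HasDerivWithinAt (fun t : ℝ => a + b - t) (-1) (Icc a b) y :=
        ((hasDerivWithinAt_id y _).const_sub (a + b))
      have h2 : HasDerivAt u (deriv u (a + b - y)) (a + b - y) :=
        (hu.differentiable one_ne_zero).differentiableAt.hasDerivAt
      simpa [Function.comp_def] using h2.comp_hasDerivWithinAt y h1
    have hbound : ∀ y ∈ Ico a b, ‖-(deriv u (a + b - y))‖ ≤ C := by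
      intro y hy
      rw [norm_neg]
      exact hC _ ⟨by cases hy with | intro h1 h2 => linarith, by cases hy with | intro h1 h2 => linarith [h1]⟩
    have hx' : a + b - x ∈ Icc a b := ⟨by linarith [hx.2], by linarith [hx.1]⟩
    have := norm_image_sub_le_of_norm_deriv_le_segment' hder hbound (a + b - x)
      ⟨by linarith [hx.2], by linarith [hx.1]⟩
    simp only [show a + b - (a + b - x) = x from by ring] at this
    simpa [hb, show a + b - x - a = b - x from by ring] using this
  -- the key functions
  set G : ℝ → ℝ := fun x => (u x)^2 * (k * Real.cos (k*(x-a)) / Real.sin (k*(x-a))) with hGdef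
  set h : ℝ → ℝ := fun x => deriv u x - k * Real.cos (k*(x-a)) / Real.sin (k*(x-a)) * u x with hhdef
  set g : ℝ → ℝ := fun x => (deriv u x)^2 - k^2 * (u x)^2 with hgdef
  have hgc : Continuous g := by fun_prop
  have hsinpos : ∀ x ∈ Ioo a b, 0 < Real.sin (k*(x-a)) := by
    intro x hx
    apply Real.sin_pos_of_pos_of_lt_pi
    · exact mul_pos hk (by linarith [hx.1])
    · have : k * (x - a) < k * L := by
        apply mul_lt_mul_of_pos_left _ hk
        simp [hLdef]; linarith [hx.2]
      linarith [hkL ▸ this]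
  have hG : ∀ x ∈ Ioo a b, HasDerivAt G (g x - (h x)^2) x := by
    intro x hx
    have hs := hsinpos x hx
    have hsne : Real.sin (k*(x-a)) ≠ 0 := ne_of_gt hs
    have hlin : HasDerivAt (fun t : ℝ => k * (t - a)) k x := by
      simpa using ((hasDerivAt_id x).sub_const a).const_mul k
    have hsin : HasDerivAt (fun t => Real.sin (k*(t-a))) (Real.cos (k*(x-a)) * k) x :=
      (Real.hasDerivAt_sin _).comp x hlin
    have hcos : HasDerivAt (fun t => Real.cos (k*(t-a))) (-Real.sin (k*(x-a)) * k) x :=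
      (Real.hasDerivAt_cos _).comp x hlin
    have hquot : HasDerivAt (fun t => k * Real.cos (k*(t-a)) / Real.sin (k*(t-a)))
        ((k * (-Real.sin (k*(x-a)) * k) * Real.sin (k*(x-a)) -
          k * Real.cos (k*(x-a)) * (Real.cos (k*(x-a)) * k)) / (Real.sin (k*(x-a)))^2) x :=
      (hcos.const_mul k).div hsin hsne
    have husq : HasDerivAt (fun t => (u t)^2) (2 * u x * deriv u x) x := by
      have := ((hu.differentiable one_ne_zero).differentiableAt.hasDerivAt (x := x)).pow 2
      simpa [mul_comm, mul_assoc, mul_left_comm, Pi.pow_def] using this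
    have := husq.mul hquot
    refine this.congr_deriv ?_
    simp only [hhdef, hgdef]; field_simp
    ring_nf
  -- epsilon estimate
  have key : ∀ ε ∈ Ioo (0:ℝ) (L/2),
      G (b - ε) - G (a + ε) ≤ ∫ x in (a+ε)..(b-ε), g x := by
    intro ε hε
    obtain ⟨hε0, hεL⟩ := hε
    have h1 : a + ε ≤ b - ε := by simp [hLdef] at hεL ⊢; linarith
    have hsub : Icc (a+ε) (b-ε) ⊆ Ioo a b := fun x hx => ⟨by linarith [hx.1], by linarith [hx.2]⟩
    have hfc : ContinuousOn (fun x => g x - (h x)^2) (Icc (a+ε) (b-ε)) := by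
      apply ContinuousOn.sub hgc.continuousOn
      apply ContinuousOn.pow
      apply ContinuousOn.sub hU'c.continuousOn
      apply ContinuousOn.mul _ hUc.continuousOn
      apply ContinuousOn.div (by fun_prop) (by fun_prop)
      intro x hx; exact ne_of_gt (hsinpos x (hsub hx))
    have hint : IntervalIntegrable (fun x => g x - (h x)^2) volume (a+ε) (b-ε) :=
      (hfc.mono (by rw [uIcc_of_le h1])).intervalIntegrable
    have hFTC := intervalIntegral.integral_eq_sub_of_hasDerivAt
      (f := G) (f' := fun x => g x - (h x)^2)
      (fun x hx => hG x (hsub (by rwa [uIcc_of_le h1] at hx))) hint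
    have hgint : IntervalIntegrable g volume (a+ε) (b-ε) := hgc.intervalIntegrable _ _
    have hhint : IntervalIntegrable (fun x => (h x)^2) volume (a+ε) (b-ε) := by
      have : (fun x => (h x)^2) = (fun x => g x - (g x - (h x)^2)) := by funext x; ring
      rw [this]; exact hgint.sub hint
    have hsplit : ∫ x in (a+ε)..(b-ε), (g x - (h x)^2) =
        (∫ x in (a+ε)..(b-ε), g x) - ∫ x in (a+ε)..(b-ε), (h x)^2 :=
      intervalIntegral.integral_sub hgint hhint
    have hnn : 0 ≤ ∫ x in (a+ε)..(b-ε), (h x)^2 :=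
      intervalIntegral.integral_nonneg h1 (fun x _ => sq_nonneg _)
    rw [hsplit] at hFTC
    linarith [hFTC]
  -- limits
  have hΦ : Continuous (fun t => ∫ x in a..t, g x) :=
    intervalIntegral.continuous_primitive (fun a b => hgc.intervalIntegrable a b) a
  have hlhs : Tendsto (fun ε => ∫ x in (a+ε)..(b-ε), g x) (nhdsWithin 0 (Ioi 0))
      (nhds (∫ x in a..b, g x)) := by
    have heq : ∀ ε : ℝ, ∫ x in (a+ε)..(b-ε), g x =
        (∫ x in a..(b-ε), g x) - ∫ x in a..(a+ε), g x := by
      intro ε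
      rw [← intervalIntegral.integral_add_adjacent_intervals
        (hgc.intervalIntegrable a (a+ε)) (hgc.intervalIntegrable (a+ε) (b-ε))]
      ring
    simp only [heq]
    have : Tendsto (fun ε : ℝ => (∫ x in a..(b-ε), g x) - ∫ x in a..(a+ε), g x)
        (nhds 0) (nhds ((∫ x in a..(b-0), g x) - ∫ x in a..(a+0), g x)) := by
      apply Tendsto.sub
      · exact (hΦ.comp (continuous_const.sub continuous_id)).tendsto 0
      · exact (hΦ.comp (continuous_const.add continuous_id)).tendsto 0
    simp only [sub_zero, add_zero, intervalIntegral.integral_same] at this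
    simpa using this.mono_left nhdsWithin_le_nhds
  have hrhs : Tendsto (fun ε => G (b - ε) - G (a + ε)) (nhdsWithin 0 (Ioi 0)) (nhds 0) := by
    apply squeeze_zero_norm' (a := fun ε => π * C^2 * ε)
    · filter_upwards [Ioo_mem_nhdsGT (show (0:ℝ) < L/2 by linarith)] with ε hε
      obtain ⟨hε0, hεL⟩ := hε
      have hmem1 : a + ε ∈ Icc a b := ⟨by linarith, by simp [hLdef] at hεL ⊢; linarith⟩
      have hmem2 : b - ε ∈ Icc a b := ⟨by simp [hLdef] at hεL ⊢; linarith, by linarith⟩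
      have hkε : 0 < k * ε := mul_pos hk hε0
      have hkε2 : k * ε ≤ π / 2 := by
        have : k * ε ≤ k * (L/2) := by nlinarith
        calc k * ε ≤ k * (L/2) := this
          _ = π/2 := by rw [hkdef]; field_simp
      have hsin_lb : 2 / π * (k * ε) ≤ Real.sin (k * ε) := Real.mul_le_sin hkε.le hkε2
      have hsin_pos : 0 < Real.sin (k * ε) := lt_of_lt_of_le (by positivity) hsin_lb
      have hGa : |G (a + ε)| ≤ π / 2 * C^2 * ε := by
        have hua : |u (a + ε)| ≤ C * ε := by simpa using hMVTa _ hmem1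
        have harg : k * (a + ε - a) = k * ε := by ring_nf
        have : |G (a+ε)| = (u (a+ε))^2 * (k * |Real.cos (k*ε)| / Real.sin (k*ε)) := by
          rw [hGdef]; simp only [harg]
          rw [abs_mul, abs_pow, sq_abs, abs_div, abs_mul, abs_of_pos hsin_pos, abs_of_pos hk]
        rw [this]
        have hu2 : (u (a+ε))^2 ≤ C^2 * ε^2 := by nlinarith [abs_nonneg (u (a+ε)), sq_abs (u (a+ε))]
        have hcos1 : |Real.cos (k*ε)| ≤ 1 := Real.abs_cos_le_one _
        have hfrac : k * |Real.cos (k*ε)| / Real.sin (k*ε) ≤ π / (2 * ε) := by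
          rw [div_le_div_iff₀ hsin_pos (by positivity)]
          calc k * |Real.cos (k*ε)| * (2*ε) ≤ k * 1 * (2*ε) := by nlinarith
            _ = π * (2/π * (k*ε)) := by field_simp [pi_pos.ne']
            _ ≤ π * Real.sin (k*ε) := by nlinarith [pi_pos]
        calc (u (a+ε))^2 * (k * |Real.cos (k*ε)| / Real.sin (k*ε))
            ≤ (C^2 * ε^2) * (π / (2*ε)) := by
              apply mul_le_mul hu2 hfrac (by positivity) (by positivity)
          _ = π / 2 * C^2 * ε := by field_simp
      have hGb : |G (b - ε)| ≤ π / 2 * C^2 * ε := by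
        have hub : |u (b - ε)| ≤ C * ε := by
          have := hMVTb _ hmem2; simpa using this
        have harg : k * (b - ε - a) = π - k * ε := by
          have : k * (b - ε - a) = k * L - k * ε := by rw [hLdef]; ring
          rw [this, hkL]
        have hsin_eq : Real.sin (k * (b - ε - a)) = Real.sin (k * ε) := by
          rw [harg, Real.sin_pi_sub]
        have : |G (b-ε)| = (u (b-ε))^2 * (k * |Real.cos (k*(b-ε-a))| / Real.sin (k*ε)) := by
          rw [hGdef]; simp only []
          rw [abs_mul, abs_pow, sq_abs, abs_div, abs_mul, hsin_eq, abs_of_pos hsin_pos, abs_of_pos hk]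
        rw [this]
        have hu2 : (u (b-ε))^2 ≤ C^2 * ε^2 := by nlinarith [abs_nonneg (u (b-ε)), sq_abs (u (b-ε))]
        have hcos1 : |Real.cos (k*(b-ε-a))| ≤ 1 := Real.abs_cos_le_one _
        have hfrac : k * |Real.cos (k*(b-ε-a))| / Real.sin (k*ε) ≤ π / (2 * ε) := by
          rw [div_le_div_iff₀ hsin_pos (by positivity)]
          calc k * |Real.cos (k*(b-ε-a))| * (2*ε) ≤ k * 1 * (2*ε) := by nlinarith
            _ = π * (2/π * (k*ε)) := by field_simp [pi_pos.ne']
            _ ≤ π * Real.sin (k*ε) := by nlinarith [pi_pos]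
        calc (u (b-ε))^2 * (k * |Real.cos (k*(b-ε-a))| / Real.sin (k*ε))
            ≤ (C^2 * ε^2) * (π / (2*ε)) := by
              apply mul_le_mul hu2 hfrac (by positivity) (by positivity)
          _ = π / 2 * C^2 * ε := by field_simp
      calc ‖G (b-ε) - G (a+ε)‖ ≤ |G (b-ε)| + |G (a+ε)| := abs_sub _ _
        _ ≤ π/2*C^2*ε + π/2*C^2*ε := add_le_add hGb hGa
        _ = π * C^2 * ε := by ring
    · have : Tendsto (fun ε : ℝ => π * C^2 * ε) (nhds 0) (nhds (π * C^2 * 0)) :=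
        (continuous_const.mul continuous_id).tendsto 0
      simpa using this.mono_left nhdsWithin_le_nhds
  have h0le : (0:ℝ) ≤ ∫ x in a..b, g x := by
    apply le_of_tendsto_of_tendsto hrhs hlhs
    filter_upwards [Ioo_mem_nhdsGT (show (0:ℝ) < L/2 by linarith)] with ε hε
    exact key ε hε
  have hgeq : ∫ x in a..b, g x =
      (∫ x in a..b, (deriv u x)^2) - k^2 * ∫ x in a..b, (u x)^2 := by
    rw [hgdef]; beta_reduce
    rw [intervalIntegral.integral_sub (f := fun x => (deriv u x)^2) (g := fun x => k^2 * (u x)^2) ((hU'c.pow 2).intervalIntegrable _ _) ((continuous_const.mul (hUc.pow 2)).intervalIntegrable _ _)]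
    congr 1
    exact intervalIntegral.integral_const_mul _ _
  rw [hgeq] at h0le
  have : k^2 = (π / L)^2 := by rw [hkdef]
  linarith [h0le]

lemma piece {a b : ℝ} (hab : a < b) (u : ℝ → ℝ) (hu : ContDiff ℝ 1 u)
    {μ ε : ℝ} (hμ0 : 0 ≤ μ) (hμ : μ ≤ (π / (b - a))^2) (hε : 0 < ε) (hba : b - a ≤ 1) :
    μ * ((∫ x in a..b, (u x)^2) - (1 + 1/ε) * (2 * ((u a)^2 + (u b)^2))) ≤
      (1 + ε) * ∫ x in a..b, (deriv u x)^2 := by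
  have hUc : Continuous u := hu.continuous
  have hU'c : Continuous (deriv u) := hu.continuous_deriv le_rfl
  set κ := (u b - u a) / (b - a) with hκdef
  set ℓ : ℝ → ℝ := fun x => u a + κ * (x - a) with hℓdef
  set v : ℝ → ℝ := fun x => u x - ℓ x with hvdef
  have hℓcd : ContDiff ℝ 1 ℓ := by
    apply ContDiff.add contDiff_const
    exact ContDiff.mul contDiff_const (contDiff_id.sub contDiff_const)
  have hv : ContDiff ℝ 1 v := hu.sub hℓcd
  have hva : v a = 0 := by simp [hvdef, hℓdef]
  have hvb : v b = 0 := by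
    have hne : b - a ≠ 0 := sub_ne_zero.2 hab.ne'
    simp only [hvdef, hℓdef, hκdef]
    rw [div_mul_cancel₀ _ hne]
    ring
  have hℓder : ∀ x : ℝ, HasDerivAt ℓ κ x := by
    intro x
    simpa [hℓdef] using (((hasDerivAt_id x).sub_const a).const_mul κ).const_add (u a)
  have hvder : ∀ x : ℝ, deriv v x = deriv u x - κ := by
    intro x
    have h1 : HasDerivAt v (deriv u x - κ) x :=
      ((hu.differentiable one_ne_zero).differentiableAt.hasDerivAt).sub (hℓder x)
    exact h1.deriv
  have hW := wirtinger hab v hv hva hvb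
  -- ∫ (deriv v)^2 ≤ ∫ (deriv u)^2
  have hintu' : ∀ c d : ℝ, IntervalIntegrable (fun x => deriv u x) volume c d :=
    fun c d => hU'c.intervalIntegrable c d
  have hFTCu : ∫ x in a..b, deriv u x = u b - u a :=
    intervalIntegral.integral_deriv_eq_sub
      (fun x _ => (hu.differentiable one_ne_zero).differentiableAt) (hintu' a b)
  have hDvDu : ∫ x in a..b, (deriv v x)^2 ≤ ∫ x in a..b, (deriv u x)^2 := by
    have heq : ∀ x : ℝ, (deriv v x)^2 = (deriv u x)^2 - (2*κ) * deriv u x + κ^2 := by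
      intro x; rw [hvder x]; ring
    have h1 : ∫ x in a..b, (deriv v x)^2 =
        (∫ x in a..b, (deriv u x)^2) - (2*κ) * (u b - u a) + κ^2 * (b - a) := by
      simp only [heq]
      rw [intervalIntegral.integral_add (f := fun x => (deriv u x)^2 - 2*κ*deriv u x) (g := fun _ => κ^2) (IntervalIntegrable.sub
          ((hU'c.pow 2).intervalIntegrable a b)
          (((continuous_const.mul hU'c)).intervalIntegrable a b))
          (intervalIntegrable_const),
        intervalIntegral.integral_sub (f := fun x => (deriv u x)^2) (g := fun x => 2*κ*deriv u x) ((hU'c.pow 2).intervalIntegrable a b)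
          ((continuous_const.mul hU'c).intervalIntegrable a b),
        intervalIntegral.integral_const_mul, hFTCu, intervalIntegral.integral_const]
      simp [smul_eq_mul]
      ring
    rw [h1]
    have hκb : κ * (b-a) = u b - u a := by
      rw [hκdef]; exact div_mul_cancel₀ _ (sub_ne_zero.2 hab.ne')
    have : (2*κ) * (u b - u a) = 2 * κ^2 * (b-a) := by rw [← hκb]; ring
    rw [this]
    nlinarith [sq_nonneg κ, sub_pos.2 hab]
  -- ∫ u^2 ≤ (1+ε) ∫ v^2 + (1+1/ε) ∫ ℓ^2
  have hvc : Continuous v := hv.continuous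
  have hℓc : Continuous ℓ := hℓcd.continuous
  have hptwise : ∀ x ∈ Icc a b, (u x)^2 ≤ (1+ε)*(v x)^2 + (1+1/ε)*(ℓ x)^2 := by
    intro x _
    have hux : u x = v x + ℓ x := by simp [hvdef]
    rw [hux]
    have h2 : 0 ≤ (ε * v x - ℓ x)^2 := sq_nonneg _
    have h3 : 0 < ε := hε
    rw [div_eq_mul_inv]
    nlinarith [sq_nonneg (ε * v x - ℓ x), mul_inv_cancel₀ (ne_of_gt hε), hε,
      mul_nonneg (le_of_lt (inv_pos.2 hε)) (sq_nonneg (ε * v x - ℓ x))]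
  have hIu : (∫ x in a..b, (u x)^2) ≤
      (1+ε) * (∫ x in a..b, (v x)^2) + (1+1/ε) * ∫ x in a..b, (ℓ x)^2 := by
    have hcont2 : Continuous (fun x => (1+ε)*(v x)^2 + (1+1/ε)*(ℓ x)^2) :=
      (continuous_const.mul (hvc.pow 2)).add (continuous_const.mul (hℓc.pow 2))
    have := intervalIntegral.integral_mono_on (μ := volume) hab.le
      ((hUc.pow 2).intervalIntegrable a b)
      (hcont2.intervalIntegrable a b)
      hptwise
    calc (∫ x in a..b, (u x)^2) ≤ ∫ x in a..b, ((1+ε)*(v x)^2 + (1+1/ε)*(ℓ x)^2) := this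
      _ = (1+ε) * (∫ x in a..b, (v x)^2) + (1+1/ε) * ∫ x in a..b, (ℓ x)^2 := by
          rw [intervalIntegral.integral_add (f := fun x => (1+ε)*(v x)^2) (g := fun x => (1+1/ε)*(ℓ x)^2)
            (((continuous_const.mul (hvc.pow 2)) :
              Continuous (fun x => (1+ε)*(v x)^2)).intervalIntegrable a b)
            (((continuous_const.mul (hℓc.pow 2)) :
              Continuous (fun x => (1+1/ε)*(ℓ x)^2)).intervalIntegrable a b),
            intervalIntegral.integral_const_mul, intervalIntegral.integral_const_mul]
  -- ∫ ℓ^2 ≤ 2 ((u a)^2 + (u b)^2)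
  have hIℓ : (∫ x in a..b, (ℓ x)^2) ≤ 2 * ((u a)^2 + (u b)^2) := by
    have hpt : ∀ x ∈ Icc a b, (ℓ x)^2 ≤ 2 * ((u a)^2 + (u b)^2) := by
      intro x hx
      have hb_a : 0 < b - a := by linarith
      have hkey : ℓ x * (b - a) = u a * (b - x) + u b * (x - a) := by
        simp only [hℓdef, hκdef]; field_simp; ring
      have h1 : (ℓ x * (b-a))^2 ≤ ((u a)^2 + (u b)^2) * ((b-x)^2 + (x-a)^2) := by
        rw [hkey]; nlinarith [sq_nonneg (u a * (x-a) - u b * (b-x))]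
      have h2 : (b-x)^2 + (x-a)^2 ≤ (b-a)^2 := by
        nlinarith [mul_nonneg (sub_nonneg.2 hx.1) (sub_nonneg.2 hx.2)]
      have h3 : (ℓ x)^2 * (b-a)^2 ≤ ((u a)^2 + (u b)^2) * (b-a)^2 := by
        nlinarith [sq_nonneg (u a), sq_nonneg (u b), sq_nonneg (ℓ x)]
      have h4 : (ℓ x)^2 ≤ (u a)^2 + (u b)^2 := by
        have := mul_le_mul_of_nonneg_right h3 (le_of_lt (inv_pos.2 (by positivity : (0:ℝ) < (b-a)^2)))
        rw [mul_assoc, mul_inv_cancel₀ (by positivity : ((b-a)^2 : ℝ) ≠ 0), mul_one,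
          mul_assoc, mul_inv_cancel₀ (by positivity : ((b-a)^2 : ℝ) ≠ 0), mul_one] at this
        exact this
      nlinarith [sq_nonneg (u a), sq_nonneg (u b)]
    calc (∫ x in a..b, (ℓ x)^2) ≤ ∫ _x in a..b, 2 * ((u a)^2 + (u b)^2) :=
          intervalIntegral.integral_mono_on hab.le ((hℓc.pow 2).intervalIntegrable a b)
            intervalIntegrable_const hpt
      _ = 2 * ((u a)^2 + (u b)^2) * (b - a) := by
          rw [intervalIntegral.integral_const]; simp [mul_comm]
      _ ≤ 2 * ((u a)^2 + (u b)^2) := by nlinarith [sq_nonneg (u a), sq_nonneg (u b), hba]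
  -- combine
  have hv2nn : 0 ≤ ∫ x in a..b, (v x)^2 :=
    intervalIntegral.integral_nonneg hab.le (fun x _ => sq_nonneg _)
  have hεp : (0:ℝ) < 1 + ε := by linarith
  have hinvεp : (0:ℝ) ≤ 1 + 1/ε := by positivity
  have c1 : (∫ x in a..b, (u x)^2) - (1+1/ε) * (2*((u a)^2 + (u b)^2)) ≤
      (1+ε) * ∫ x in a..b, (v x)^2 := by
    have := mul_le_mul_of_nonneg_left hIℓ hinvεp
    linarith
  have c2 : μ * ((1+ε) * ∫ x in a..b, (v x)^2) ≤ (1+ε) * ∫ x in a..b, (deriv u x)^2 := by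
    have h5 : μ * (∫ x in a..b, (v x)^2) ≤ (π/(b-a))^2 * ∫ x in a..b, (v x)^2 :=
      mul_le_mul_of_nonneg_right hμ hv2nn
    have h6 : (π/(b-a))^2 * (∫ x in a..b, (v x)^2) ≤ ∫ x in a..b, (deriv u x)^2 :=
      le_trans hW hDvDu
    nlinarith
  calc μ * ((∫ x in a..b, (u x)^2) - (1+1/ε) * (2*((u a)^2 + (u b)^2)))
      ≤ μ * ((1+ε) * ∫ x in a..b, (v x)^2) := mul_le_mul_of_nonneg_left c1 hμ0
    _ ≤ (1+ε) * ∫ x in a..b, (deriv u x)^2 := c2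

lemma ident_aux {μ P : ℝ} (hP : 0 < P) (hμ : P < μ) :
    (1 + (μ - P)/(μ + P)) * (P + (μ - P)/4) =
      μ * (1 - (1 + 1/((μ - P)/(μ + P))) * (4 * ((μ - P)^2/(16*μ*(μ + P))))) := by
  have h1 : μ + P ≠ 0 := by intro h; linarith
  have h2 : μ - P ≠ 0 := by intro h; linarith [sub_eq_zero.1 h]
  have h3 : μ ≠ 0 := by intro h; linarith
  field_simp
  ring

lemma rayleigh_nonempty (c : ℝ → ℝ) : (rayleighSet1D 1 c).Nonempty := by
  refine ⟨_, fun x => Real.sqrt 2 * Real.sin (π * x), ?_, ?_, ?_, ?_, rfl⟩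
  · exact contDiff_const.mul (Real.contDiff_sin.comp (contDiff_const.mul contDiff_id))
  · simp
  · simp [Real.sin_pi]
  · have h1 : ∀ x : ℝ, (Real.sqrt 2 * Real.sin (π * x))^2 = 2 * (fun y => Real.sin y ^ 2) (π * x) := by
      intro x
      simp only [mul_pow, Real.sq_sqrt (by norm_num : (2:ℝ) ≥ 0)]
    simp only [h1]
    rw [intervalIntegral.integral_const_mul,
      intervalIntegral.integral_comp_mul_left (fun y => Real.sin y ^ 2) (ne_of_gt pi_pos)]
    simp [integral_sin_sq, Real.sin_pi]
    field_simp

/-- If c ≤ π² on (0,1) and c is not identically π², then the first eigenvalue of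
−(u'' + c·u) with Dirichlet conditions on (0,1) is strictly positive. -/
theorem first_eigenvalue_positive_of_c_le_pi_sq (c : ℝ → ℝ)
    (hc_cont : ContinuousOn c (Set.Ioo (0:ℝ) 1))
    (hc_le : ∀ x ∈ Set.Ioo (0:ℝ) 1, c x ≤ Real.pi ^ 2)
    (hc_ne : ∃ x ∈ Set.Ioo (0:ℝ) 1, c x ≠ Real.pi ^ 2) :
    0 < sInf (rayleighSet1D 1 c) := by
  set P := π^2 with hPdef
  have hPpos : 0 < P := by positivity
  obtain ⟨x₀, hx₀, hcx₀ne⟩ := hc_ne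
  have hcx₀ : c x₀ < P := lt_of_le_of_ne (hc_le x₀ hx₀) hcx₀ne
  set δ := (P - c x₀)/2 with hδdef
  have hδpos : 0 < δ := by rw [hδdef]; linarith
  have hnhds : {y | c y < P - δ} ∩ Ioo 0 1 ∈ nhds x₀ := by
    apply Filter.inter_mem
    · exact (hc_cont.continuousAt (isOpen_Ioo.mem_nhds hx₀)) (Iio_mem_nhds (by rw [hδdef]; linarith))
    · exact isOpen_Ioo.mem_nhds hx₀
  obtain ⟨rr, hrr, hball⟩ := Metric.mem_nhds_iff.1 hnhds
  set α := x₀ - rr/2 with hαdef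
  set β := x₀ + rr/2 with hβdef
  have hαβ : α < β := by rw [hαdef, hβdef]; linarith
  have hIccsub : Icc α β ⊆ {y | c y < P - δ} ∩ Ioo 0 1 := by
    intro y hy
    apply hball
    rw [Metric.mem_ball, Real.dist_eq, abs_sub_lt_iff]
    obtain ⟨h1, h2⟩ := hy
    constructor <;> [skip; skip] <;> rw [hαdef] at h1 <;> rw [hβdef] at h2 <;> linarith
  have hα0 : 0 < α := (hIccsub (left_mem_Icc.2 hαβ.le)).2.1
  have hβ1 : β < 1 := (hIccsub (right_mem_Icc.2 hαβ.le)).2.2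
  have hβ0 : 0 < β := by linarith
  have hα1 : α < 1 := by linarith
  set lam := max β (1 - α) with hlamdef
  have hlam0 : 0 < lam := lt_of_lt_of_le hβ0 (le_max_left _ _)
  have hlam1 : lam < 1 := max_lt hβ1 (by linarith)
  have hβlam : β ≤ lam := le_max_left _ _
  have hαlam : 1 - α ≤ lam := le_max_right _ _
  set μ := (π/lam)^2 with hμdef
  have hμpos : 0 < μ := by positivity
  have hμP : P < μ := by
    have h1 : π < π / lam := by
      rw [lt_div_iff₀ hlam0]
      calc π * lam < π * 1 := mul_lt_mul_of_pos_left hlam1 pi_pos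
        _ = π := mul_one π
    rw [hμdef, hPdef]
    exact pow_lt_pow_left₀ h1 pi_pos.le (by norm_num)
  set ε := (μ - P)/(μ + P) with hεdef
  have hεpos : 0 < ε := div_pos (by linarith) (by linarith)
  set s0 := (μ - P)^2/(16*μ*(μ+P)) with hs0def
  have hs0pos : 0 < s0 := by
    rw [hs0def]
    apply div_pos (pow_pos (by linarith) 2)
    have h16 : (0:ℝ) < 16 * μ := by linarith
    nlinarith
  set J0 := s0 * (β - α) with hJ0def
  have hJ0pos : 0 < J0 := mul_pos hs0pos (by linarith)
  set m := min (min ((μ - P)/4) (δ * J0)) P with hmdef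
  have hmpos : 0 < m := by
    apply lt_min (lt_min (by linarith) (mul_pos hδpos hJ0pos)) hPpos
  apply lt_of_lt_of_le hmpos
  apply le_csInf (rayleigh_nonempty c)
  rintro r' ⟨u, hu, hu0, hu1, hnorm, rfl⟩
  have hUc : Continuous u := hu.continuous
  have hU'c : Continuous (deriv u) := hu.continuous_deriv le_rfl
  set K := ∫ x in (0:ℝ)..1, (deriv u x)^2 with hKdef
  have hWglob : P ≤ K := by
    have := wirtinger (by norm_num : (0:ℝ) < 1) u hu hu0 hu1
    rw [hnorm] at this
    simpa [hPdef] using this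
  by_cases hI : IntervalIntegrable (fun x => c x * (u x)^2) volume 0 1
  case neg =>
    rw [intervalIntegral.integral_undef hI]
    have : m ≤ P := min_le_right _ _
    linarith
  case pos =>
  set J := ∫ x in α..β, (u x)^2 with hJdef
  have hJnn : 0 ≤ J := intervalIntegral.integral_nonneg hαβ.le (fun x _ => sq_nonneg _)
  -- step A
  set g : ℝ → ℝ := fun x => P * (u x)^2 - c x * (u x)^2 with hgdef
  have hgint : IntervalIntegrable g volume 0 1 :=
    ((continuous_const.mul (hUc.pow 2)).intervalIntegrable 0 1).sub hI
  have hgnn : ∀ x ∈ Icc (0:ℝ) 1, 0 ≤ g x := by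
    intro x hx
    rcases eq_or_lt_of_le hx.1 with h0 | h0
    · simp [hgdef, ← h0, hu0]
    rcases eq_or_lt_of_le hx.2 with h1 | h1
    · simp [hgdef, h1, hu1]
    have hle := hc_le x ⟨h0, h1⟩
    have hsq := sq_nonneg (u x)
    simp only [hgdef]
    have hexp : (P - c x) * (u x)^2 = P * (u x)^2 - c x * (u x)^2 := by ring
    have hnn := mul_nonneg (sub_nonneg.2 hle) hsq
    linarith
  have hsub1 : IntervalIntegrable g volume 0 α :=
    hgint.mono_set (by rw [uIcc_of_le hα0.le, uIcc_of_le (by norm_num : (0:ℝ) ≤ 1)]; exact Icc_subset_Icc le_rfl (by linarith))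
  have hsub2 : IntervalIntegrable g volume α β :=
    hgint.mono_set (by rw [uIcc_of_le hαβ.le, uIcc_of_le (by norm_num : (0:ℝ) ≤ 1)]; exact Icc_subset_Icc (by linarith) (by linarith))
  have hsub3 : IntervalIntegrable g volume β 1 :=
    hgint.mono_set (by rw [uIcc_of_le hβ1.le, uIcc_of_le (by norm_num : (0:ℝ) ≤ 1)]; exact Icc_subset_Icc (by linarith) le_rfl)
  have hsplitg : ∫ x in (0:ℝ)..1, g x = (∫ x in (0:ℝ)..α, g x) + (∫ x in α..β, g x) + ∫ x in β..1, g x := by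
    have t1 := intervalIntegral.integral_add_adjacent_intervals hsub1 hsub2
    have t2 := intervalIntegral.integral_add_adjacent_intervals (hsub1.trans hsub2) hsub3
    rw [t1, t2]
  have hg1 : 0 ≤ ∫ x in (0:ℝ)..α, g x :=
    intervalIntegral.integral_nonneg hα0.le (fun x hx => hgnn x ⟨hx.1, by linarith [hx.2]⟩)
  have hg3 : 0 ≤ ∫ x in β..1, g x :=
    intervalIntegral.integral_nonneg hβ1.le (fun x hx => hgnn x ⟨by linarith [hx.1], hx.2⟩)
  have hg2 : δ * J ≤ ∫ x in α..β, g x := by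
    have hmono := intervalIntegral.integral_mono_on (μ := volume) hαβ.le
      ((continuous_const.mul (hUc.pow 2)).intervalIntegrable α β) hsub2
      (fun x hx => by
        have hcx : c x < P - δ := (hIccsub hx).1
        have := sq_nonneg (u x)
        simp only [hgdef]
        show δ * (u x)^2 ≤ _
        have hexp : (P - δ - c x) * (u x)^2 = P * (u x)^2 - c x * (u x)^2 - δ * (u x)^2 := by ring
        have hnn := mul_nonneg (by linarith : (0:ℝ) ≤ P - δ - c x) (sq_nonneg (u x))
        linarith)
    calc δ * J = ∫ x in α..β, δ * (u x)^2 := by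
          rw [intervalIntegral.integral_const_mul]
      _ ≤ ∫ x in α..β, g x := hmono
  have hIbound : (∫ x in (0:ℝ)..1, c x * (u x)^2) ≤ P - δ * J := by
    have hgval : ∫ x in (0:ℝ)..1, g x = P - ∫ x in (0:ℝ)..1, c x * (u x)^2 := by
      rw [hgdef]; beta_reduce; rw [intervalIntegral.integral_sub (f := fun x => P * (u x)^2) (g := fun x => c x * (u x)^2) ((continuous_const.mul (hUc.pow 2) : Continuous (fun x => P * (u x)^2)).intervalIntegrable 0 1) hI,
        intervalIntegral.integral_const_mul, hnorm, mul_one]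
    have : δ * J ≤ ∫ x in (0:ℝ)..1, g x := by rw [hsplitg]; linarith
    rw [hgval] at this
    linarith
  by_cases hJcase : J0 ≤ J
  · have h1 : m ≤ δ * J0 := le_trans (min_le_left _ _) (min_le_right _ _)
    have h2 : δ * J0 ≤ δ * J := mul_le_mul_of_nonneg_left hJcase hδpos.le
    linarith
  · push_neg at hJcase
    obtain ⟨x₁, hx₁mem, hx₁⟩ : ∃ x₁ ∈ Icc α β, (u x₁)^2 < s0 := by
      by_contra hno
      push_neg at hno
      have := intervalIntegral.integral_mono_on (μ := volume) hαβ.le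
        intervalIntegrable_const ((hUc.pow 2).intervalIntegrable α β) hno
      rw [intervalIntegral.integral_const, smul_eq_mul] at this
      rw [hJ0def] at hJcase
      have : s0 * (β - α) ≤ J := by rw [hJdef]; simp only [Pi.pow_apply] at this; linarith [this]
      linarith
    have hx₁0 : 0 < x₁ := lt_of_lt_of_le hα0 hx₁mem.1
    have hx₁1 : x₁ < 1 := lt_of_le_of_lt hx₁mem.2 hβ1
    have hμle_left : μ ≤ (π/(x₁ - 0))^2 := by
      rw [sub_zero, hμdef]
      apply pow_le_pow_left₀ (by positivity)
      apply div_le_div_of_nonneg_left pi_pos.le hx₁0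
      exact le_trans hx₁mem.2 hβlam
    have hμle_right : μ ≤ (π/(1 - x₁))^2 := by
      rw [hμdef]
      apply pow_le_pow_left₀ (by positivity)
      apply div_le_div_of_nonneg_left pi_pos.le (by linarith)
      calc 1 - x₁ ≤ 1 - α := by linarith [hx₁mem.1]
        _ ≤ lam := hαlam
    have hpl := piece hx₁0 u hu hμpos.le hμle_left hεpos (by linarith)
    have hpr := piece hx₁1 u hu hμpos.le hμle_right hεpos (by linarith)
    rw [hu0] at hpl
    rw [hu1] at hpr
    have hsum2 : (∫ x in (0:ℝ)..x₁, (u x)^2) + (∫ x in x₁..1, (u x)^2) = 1 := by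
      rw [intervalIntegral.integral_add_adjacent_intervals (f := fun x => (u x)^2)
        ((hUc.pow 2 : Continuous (fun x => (u x)^2)).intervalIntegrable 0 x₁) ((hUc.pow 2 : Continuous (fun x => (u x)^2)).intervalIntegrable x₁ 1), hnorm]
    have hsumK : (∫ x in (0:ℝ)..x₁, (deriv u x)^2) + (∫ x in x₁..1, (deriv u x)^2) = K := by
      rw [hKdef, intervalIntegral.integral_add_adjacent_intervals (f := fun x => (deriv u x)^2)
        ((hU'c.pow 2 : Continuous (fun x => (deriv u x)^2)).intervalIntegrable 0 x₁) ((hU'c.pow 2 : Continuous (fun x => (deriv u x)^2)).intervalIntegrable x₁ 1)]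
    have hcomb : μ * (1 - (1 + 1/ε) * (4 * (u x₁)^2)) ≤ (1 + ε) * K := by
      have hadd := add_le_add hpl hpr
      have e1 : μ * ((∫ x in (0:ℝ)..x₁, (u x)^2) - (1 + 1/ε) * (2 * ((0:ℝ)^2 + (u x₁)^2)))
          + μ * ((∫ x in x₁..(1:ℝ), (u x)^2) - (1 + 1/ε) * (2 * ((u x₁)^2 + (0:ℝ)^2)))
          = μ * (((∫ x in (0:ℝ)..x₁, (u x)^2) + (∫ x in x₁..(1:ℝ), (u x)^2))
              - (1 + 1/ε) * (4 * (u x₁)^2)) := by ring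
      rw [e1, hsum2] at hadd
      calc μ * (1 - (1 + 1/ε) * (4 * (u x₁)^2))
          ≤ (1+ε) * (∫ x in (0:ℝ)..x₁, (deriv u x)^2)
            + (1+ε) * (∫ x in x₁..(1:ℝ), (deriv u x)^2) := hadd
        _ = (1+ε) * K := by rw [← hsumK]; ring
    have hKlower : P + (μ - P)/4 ≤ K := by
      have hμPne : μ + P ≠ 0 := by positivity
      have hμne : μ ≠ 0 := ne_of_gt hμpos
      have hεne : ε ≠ 0 := ne_of_gt hεpos
      have hident : (1 + ε) * (P + (μ - P)/4) = μ * (1 - (1 + 1/ε) * (4 * s0)) := by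
        rw [hεdef, hs0def]
        exact ident_aux hPpos hμP
      have hmono2 : μ * (1 - (1 + 1/ε) * (4 * s0)) ≤ μ * (1 - (1 + 1/ε) * (4 * (u x₁)^2)) := by
        apply mul_le_mul_of_nonneg_left _ hμpos.le
        have h7 := mul_le_mul_of_nonneg_left hx₁.le (by positivity : (0:ℝ) ≤ 1 + 1/ε)
        linarith
      have h3 : (1 + ε) * (P + (μ - P)/4) ≤ (1 + ε) * K := by
        calc (1 + ε) * (P + (μ - P)/4) = μ * (1 - (1 + 1/ε) * (4 * s0)) := hident
          _ ≤ μ * (1 - (1 + 1/ε) * (4 * (u x₁)^2)) := hmono2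
          _ ≤ (1 + ε) * K := hcomb
      exact le_of_mul_le_mul_left h3 (by linarith)
    have h4 : m ≤ (μ - P)/4 := le_trans (min_le_left _ _) (min_le_left _ _)
    have h5 : 0 ≤ δ * J := mul_nonneg hδpos.le hJnn
    linarith
end

section
/- Let Ω ⊂ ℝ^N be a connected bounded open set, c continuous on Ω with c ≤ 0, and u ∈ C²(Ω) with Δu + c·u ≥ 0 in Ω. If u attains a nonnegative maximum at an interior point of Ω, then u is constant. -/
open Metric Set Filter

noncomputable def lap {n : ℕ} (u : EuclideanSpace ℝ (Fin n) → ℝ)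
    (x : EuclideanSpace ℝ (Fin n)) : ℝ :=
  ∑ i : Fin n,
    fderiv ℝ (fun y => fderiv ℝ u y (EuclideanSpace.single i (1 : ℝ))) x
      (EuclideanSpace.single i (1 : ℝ))

/-- Endpoint derivative sign. -/
lemma deriv_nonneg_of_isMaxOn_right {g : ℝ → ℝ} {a b m : ℝ} (hab : a < b)
    (hle : ∀ t ∈ Icc a b, g t ≤ g b) (hd : HasDerivAt g m b) : 0 ≤ m := by
  have h1 : HasDerivWithinAt g m (Icc a b) b := hd.hasDerivWithinAt
  rw [hasDerivWithinAt_iff_tendsto_slope] at h1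
  have hset : Icc a b \ {b} = Ico a b := Icc_sdiff_right
  rw [hset] at h1
  have hne : (nhdsWithin b (Ico a b)).NeBot := right_nhdsWithin_Ico_neBot hab
  refine ge_of_tendsto h1 ?_
  filter_upwards [self_mem_nhdsWithin] with t ht
  have h2 : g t ≤ g b := hle t (Ico_subset_Icc_self ht)
  rw [slope_def_field]
  have h3 : t - b ≤ 0 := (sub_neg.2 ht.2).le
  exact div_nonneg_iff.2 (Or.inr ⟨sub_nonpos.2 h2, h3⟩)

/-- Second derivative test: local max at 0 implies second derivative ≤ 0. -/
lemma second_deriv_nonpos_of_max {g g' : ℝ → ℝ} {δ m : ℝ} (hδ : 0 < δ)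
    (hd : ∀ t ∈ Ioo (-δ) δ, HasDerivAt g (g' t) t)
    (hle : ∀ t ∈ Ioo (-δ) δ, g t ≤ g 0)
    (hd2 : HasDerivAt g' m 0) : m ≤ 0 := by
  have h0 : (0:ℝ) ∈ Ioo (-δ) δ := by constructor <;> linarith
  -- g' 0 = 0
  have hmax : IsLocalMax g 0 := by
    filter_upwards [Ioo_mem_nhds (by linarith : -δ < (0:ℝ)) hδ] with t ht using hle t ht
  have hg'0 : g' 0 = 0 := by
    have := hmax.deriv_eq_zero
    rw [(hd 0 h0).deriv] at this; exact this
  by_contra hm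
  push_neg at hm
  -- slope of g' at 0 tends to m > 0, hence g' > 0 just right of 0
  have h1 : HasDerivWithinAt g' m (Ioi 0) 0 := hd2.hasDerivWithinAt
  rw [hasDerivWithinAt_iff_tendsto_slope] at h1
  have hev : ∀ᶠ t in nhdsWithin 0 (Ioi 0 \ {0}), 0 < slope g' 0 t :=
    h1.eventually (eventually_gt_nhds hm)
  have hIoi : Ioi (0:ℝ) \ {0} = Ioi 0 :=
    Set.diff_singleton_eq_self (by simp)
  rw [hIoi] at hev
  rw [eventually_nhdsWithin_iff] at hev
  rcases Metric.eventually_nhds_iff.1 hev with ⟨η, hη, hball⟩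
  set τ := min (η/2) (δ/2) with hτdef
  have hτ : 0 < τ := lt_min (by linarith) (by linarith)
  have hτδ : τ < δ := lt_of_le_of_lt (min_le_right _ _) (by linarith)
  have hpos : ∀ t ∈ Ioo 0 τ, 0 < g' t := by
    intro t ht
    have hdist : dist t 0 < η := by
      rw [Real.dist_eq, sub_zero, abs_of_pos ht.1]
      exact lt_of_lt_of_le ht.2 (le_trans (min_le_left _ _) (by linarith))
    have := hball hdist ht.1
    rw [slope_def_field, hg'0, sub_zero, sub_zero] at this
    exact (div_pos_iff.1 this).resolve_right (fun h => absurd ht.1 (not_lt.2 h.2.le)) |>.1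
  -- MVT on [0, τ/2]
  obtain ⟨ξ, hξ, hslope⟩ := exists_hasDerivAt_eq_slope g g' (by linarith : (0:ℝ) < τ/2)
    (fun t ht => ((hd t ⟨by linarith [ht.1, hδ], by linarith [ht.2, hτδ]⟩).continuousAt).continuousWithinAt)
    (fun t ht => hd t ⟨by linarith [ht.1], by linarith [ht.2, hτδ]⟩)
  have h2 : g (τ/2) ≤ g 0 := hle _ ⟨by linarith, by linarith⟩
  have h3 : 0 < g' ξ := hpos ξ ⟨hξ.1, by linarith [hξ.2]⟩
  rw [hslope] at h3
  have h5 : (0:ℝ) ≤ τ/2 - 0 := by linarith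
  have h4 : (g (τ/2) - g 0)/(τ/2 - 0) ≤ 0 :=
    div_nonpos_iff.2 (Or.inr ⟨sub_nonpos.2 h2, h5⟩)
  linarith
lemma lap_nonpos_of_max {n : ℕ} {w : EuclideanSpace ℝ (Fin n) → ℝ}
    {z : EuclideanSpace ℝ (Fin n)} {s : Set (EuclideanSpace ℝ (Fin n))}
    (hs : IsOpen s) (hz : z ∈ s) (hw : ContDiffOn ℝ 2 w s)
    (hmax : ∀ x ∈ s, w x ≤ w z) : lap w z ≤ 0 := by
  obtain ⟨δ, hδ, hball⟩ := Metric.isOpen_iff.1 hs z hz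
  apply Finset.sum_nonpos
  intro i _
  set e : EuclideanSpace ℝ (Fin n) := EuclideanSpace.single i (1:ℝ) with he
  have hne : ‖e‖ = 1 := by rw [he, EuclideanSpace.norm_single]; norm_num
  set L : ℝ → EuclideanSpace ℝ (Fin n) := fun t => z + t • e with hL
  have hLmem : ∀ t ∈ Ioo (-δ) δ, L t ∈ ball z δ := by
    intro t ht
    rw [mem_ball, hL]
    simp only [dist_eq_norm, add_sub_cancel_left, norm_smul, hne, mul_one,
      Real.norm_eq_abs]
    exact abs_lt.2 ⟨ht.1, ht.2⟩
  have hLd : ∀ t : ℝ, HasDerivAt L e t := by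
    intro t
    have := ((hasDerivAt_id t).smul_const e).const_add z; rw [one_smul] at this; exact this
  have hL0 : L 0 = z := by simp [hL]
  have hwd : ∀ t ∈ Ioo (-δ) δ, DifferentiableAt ℝ w (L t) := by
    intro t ht
    exact (hw.differentiableOn (by norm_num)).differentiableAt
      (hs.mem_nhds (hball (hLmem t ht)))
  refine second_deriv_nonpos_of_max (g := w ∘ L)
    (g' := fun t => fderiv ℝ w (L t) e) hδ ?_ ?_ ?_
  · intro t ht
    exact ((hwd t ht).hasFDerivAt).comp_hasDerivAt t (hLd t)
  · intro t ht
    have := hmax (L t) (hball (hLmem t ht))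
    simpa [hL0] using this
  · have hc2 : ContDiffAt ℝ 2 w z := hw.contDiffAt (hs.mem_nhds hz)
    have hf1 : ContDiffAt ℝ 1 (fderiv ℝ w) z := hc2.fderiv_right (by norm_num)
    have hf1' : DifferentiableAt ℝ (fun y => fderiv ℝ w y e) z :=
      (hf1.differentiableAt one_ne_zero).clm_apply (differentiableAt_const e)
    have h0 : HasFDerivAt (fun y => fderiv ℝ w y e)
        (fderiv ℝ (fun y => fderiv ℝ w y e) z) (L 0) := hL0.symm ▸ hf1'.hasFDerivAt
    exact h0.comp_hasDerivAt 0 (hLd 0)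
section Barrier
variable {n : ℕ} (y : EuclideanSpace ℝ (Fin n)) (α K : ℝ)

/-- squared distance to y -/
noncomputable def qf (z : EuclideanSpace ℝ (Fin n)) : ℝ := ∑ i, (z i - y i)^2

/-- derivative of qf -/
noncomputable def Dq (z : EuclideanSpace ℝ (Fin n)) :
    EuclideanSpace ℝ (Fin n) →L[ℝ] ℝ :=
  ∑ i, (2*(z i - y i)) • (EuclideanSpace.proj i : EuclideanSpace ℝ (Fin n) →L[ℝ] ℝ)

lemma Dq_apply (z v : EuclideanSpace ℝ (Fin n)) :
    Dq y z v = ∑ i, 2*(z i - y i) * v i := by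
  simp [Dq, ContinuousLinearMap.sum_apply]

lemma Dq_single (z : EuclideanSpace ℝ (Fin n)) (i : Fin n) :
    Dq y z (EuclideanSpace.single i (1:ℝ)) = 2*(z i - y i) := by
  rw [Dq_apply]
  rw [Finset.sum_eq_single i]
  · simp
  · intro j _ hj; simp [EuclideanSpace.single_apply, hj]
  · simp

lemma qf_eq_dist (z : EuclideanSpace ℝ (Fin n)) : qf y z = dist z y ^ 2 := by
  rw [EuclideanSpace.dist_eq, Real.sq_sqrt (by positivity)]
  simp [qf, Real.dist_eq, sq_abs]

lemma hasFDerivAt_qf (z : EuclideanSpace ℝ (Fin n)) :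
    HasFDerivAt (qf y) (Dq y z) z := by
  apply HasFDerivAt.fun_sum
  intro i _
  have h1 : HasDerivAt (fun t : ℝ => (t - y i)^2) (2*(z i - y i)) (z i) := by
    have := ((hasDerivAt_id (z i)).sub_const (y i)).pow 2
    simp at this; exact this
  have hp : HasFDerivAt (fun z' : EuclideanSpace ℝ (Fin n) => z' i)
      (EuclideanSpace.proj i : EuclideanSpace ℝ (Fin n) →L[ℝ] ℝ) z :=
    (EuclideanSpace.proj i : EuclideanSpace ℝ (Fin n) →L[ℝ] ℝ).hasFDerivAt
  have := h1.comp_hasFDerivAt z hp; exact this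

/-- the barrier -/
noncomputable def barrier (z : EuclideanSpace ℝ (Fin n)) : ℝ :=
  Real.exp (-(α * qf y z)) - K

lemma hasFDerivAt_barrier (z : EuclideanSpace ℝ (Fin n)) :
    HasFDerivAt (barrier y α K)
      ((-α * Real.exp (-(α * qf y z))) • Dq y z) z := by
  have h1 : HasDerivAt (fun t : ℝ => Real.exp (-(α * t)) - K)
      (-α * Real.exp (-(α * qf y z))) (qf y z) := by
    have h2 : HasDerivAt (fun t : ℝ => -(α * t)) (-α) (qf y z) := by
      have := ((hasDerivAt_id (qf y z)).const_mul α).neg; simp only [id, mul_one] at this; exact this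
    have := (Real.hasDerivAt_exp (-(α * qf y z))).comp (qf y z) h2
    simpa [mul_comm] using this.sub_const K
  exact h1.comp_hasFDerivAt z (hasFDerivAt_qf y z)

lemma fderiv_barrier (z : EuclideanSpace ℝ (Fin n)) :
    fderiv ℝ (barrier y α K) z = (-α * Real.exp (-(α * qf y z))) • Dq y z :=
  (hasFDerivAt_barrier y α K z).fderiv

lemma hasFDerivAt_Gi (i : Fin n) (z : EuclideanSpace ℝ (Fin n)) :
    HasFDerivAt (fun z' => (-α * Real.exp (-(α * qf y z'))) * (2 * (z' i - y i)))
      (((-α * Real.exp (-(α * qf y z))) • ((2:ℝ) • (EuclideanSpace.proj i : EuclideanSpace ℝ (Fin n) →L[ℝ] ℝ))) +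
        ((2 * (z i - y i)) • ((α^2 * Real.exp (-(α * qf y z))) • Dq y z))) z := by
  have hA : HasFDerivAt (fun z' => -α * Real.exp (-(α * qf y z')))
      ((α^2 * Real.exp (-(α * qf y z))) • Dq y z) z := by
    have h1 : HasDerivAt (fun t : ℝ => -α * Real.exp (-(α * t)))
        (α^2 * Real.exp (-(α * qf y z))) (qf y z) := by
      have h2 : HasDerivAt (fun t : ℝ => -(α * t)) (-α) (qf y z) := by
        have := ((hasDerivAt_id (qf y z)).const_mul α).neg; simp only [id, mul_one] at this; exact this
      have := ((Real.hasDerivAt_exp (-(α * qf y z))).comp (qf y z) h2).const_mul (-α)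
      have e : α^2 * Real.exp (-(α * qf y z)) = -α * (Real.exp (-(α * qf y z)) * -α) := by ring
      rw [e]; exact this
    exact h1.comp_hasFDerivAt z (hasFDerivAt_qf y z)
  have hB : HasFDerivAt (fun z' : EuclideanSpace ℝ (Fin n) => 2 * (z' i - y i))
      ((2:ℝ) • (EuclideanSpace.proj i : EuclideanSpace ℝ (Fin n) →L[ℝ] ℝ)) z := by
    have h1 : HasDerivAt (fun t : ℝ => 2 * (t - y i)) 2 (z i) := by
      simpa using ((hasDerivAt_id (z i)).sub_const (y i)).const_mul 2
    have hp : HasFDerivAt (fun z' : EuclideanSpace ℝ (Fin n) => z' i)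
        (EuclideanSpace.proj i : EuclideanSpace ℝ (Fin n) →L[ℝ] ℝ) z :=
      (EuclideanSpace.proj i : EuclideanSpace ℝ (Fin n) →L[ℝ] ℝ).hasFDerivAt
    have := h1.comp_hasFDerivAt z hp; exact this
  exact hA.mul hB

lemma lap_barrier (z : EuclideanSpace ℝ (Fin n)) :
    lap (barrier y α K) z =
      Real.exp (-(α * qf y z)) * (4*α^2 * qf y z - 2*α*n) := by
  unfold lap
  have hfun : ∀ i : Fin n, (fun y' => fderiv ℝ (barrier y α K) y' (EuclideanSpace.single i (1:ℝ)))
      = fun z' => (-α * Real.exp (-(α * qf y z'))) * (2 * (z' i - y i)) := by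
    intro i
    funext z'
    rw [fderiv_barrier]
    rw [ContinuousLinearMap.smul_apply, Dq_single]
    simp [mul_assoc]
  have hterm : ∀ i : Fin n,
      fderiv ℝ (fun y' => fderiv ℝ (barrier y α K) y' (EuclideanSpace.single i (1:ℝ))) z
        (EuclideanSpace.single i (1:ℝ))
      = Real.exp (-(α * qf y z)) * (4*α^2*(z i - y i)^2 - 2*α) := by
    intro i
    rw [hfun i, (hasFDerivAt_Gi y α i z).fderiv]
    simp only [ContinuousLinearMap.add_apply, ContinuousLinearMap.smul_apply,
      Dq_single, PiLp.proj_apply, EuclideanSpace.single_apply, if_pos rfl, if_true, eq_self_iff_true,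
      smul_eq_mul]
    ring
  rw [Finset.sum_congr rfl (fun i _ => hterm i)]
  rw [← Finset.mul_sum]
  congr 1
  rw [Finset.sum_sub_distrib, ← Finset.mul_sum]
  simp only [Finset.sum_const, Finset.card_univ, Fintype.card_fin, nsmul_eq_mul]
  unfold qf
  ring

lemma fderiv_barrier_single (i : Fin n) :
    (fun z' => fderiv ℝ (barrier y α K) z' (EuclideanSpace.single i (1:ℝ)))
      = fun z' => (-α * Real.exp (-(α * qf y z'))) * (2 * (z' i - y i)) := by
  funext z'
  rw [(hasFDerivAt_barrier y α K z').fderiv, ContinuousLinearMap.smul_apply, Dq_single]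
  simp [mul_assoc]

lemma lap_add_barrier {v : EuclideanSpace ℝ (Fin n) → ℝ}
    {s : Set (EuclideanSpace ℝ (Fin n))} {z : EuclideanSpace ℝ (Fin n)} (ε : ℝ)
    (hs : IsOpen s) (hz : z ∈ s) (hv : ContDiffOn ℝ 2 v s) :
    lap (fun x => v x + ε * barrier y α K x) z
      = lap v z + ε * lap (barrier y α K) z := by
  have key : ∀ i : Fin n,
      fderiv ℝ (fun x' => fderiv ℝ (fun x => v x + ε * barrier y α K x) x'
          (EuclideanSpace.single i (1:ℝ))) z (EuclideanSpace.single i (1:ℝ))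
      = fderiv ℝ (fun x' => fderiv ℝ v x' (EuclideanSpace.single i (1:ℝ))) z
          (EuclideanSpace.single i (1:ℝ))
        + ε * fderiv ℝ (fun z' => (-α * Real.exp (-(α * qf y z'))) * (2 * (z' i - y i))) z
          (EuclideanSpace.single i (1:ℝ)) := by
    intro i
    set e : EuclideanSpace ℝ (Fin n) := EuclideanSpace.single i (1:ℝ) with he
    have hev : (fun x' => fderiv ℝ (fun x => v x + ε * barrier y α K x) x' e)
        =ᶠ[nhds z] (fun x' => fderiv ℝ v x' e
          + ε * ((-α * Real.exp (-(α * qf y x'))) * (2*(x' i - y i)))) := by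
      filter_upwards [hs.mem_nhds hz] with x hx
      have hvd : DifferentiableAt ℝ v x :=
        (hv.differentiableOn (by norm_num)).differentiableAt (hs.mem_nhds hx)
      have hw : HasFDerivAt (fun x => v x + ε * barrier y α K x)
          (fderiv ℝ v x + ε • ((-α * Real.exp (-(α * qf y x))) • Dq y x)) x :=
        hvd.hasFDerivAt.add ((hasFDerivAt_barrier y α K x).const_mul ε)
      rw [hw.fderiv]
      simp only [ContinuousLinearMap.add_apply, ContinuousLinearMap.smul_apply,
        he, Dq_single, smul_eq_mul]
      try ring
    rw [hev.fderiv_eq]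
    have hd1 : DifferentiableAt ℝ (fderiv ℝ v) z :=
      (((hv.contDiffAt (hs.mem_nhds hz)).fderiv_right (m := 1)
        (by norm_num))).differentiableAt one_ne_zero
    have hA : DifferentiableAt ℝ (fun x' => fderiv ℝ v x' e) z :=
      hd1.clm_apply (differentiableAt_const e)
    have hB : DifferentiableAt ℝ
        (fun z' => (-α * Real.exp (-(α * qf y z'))) * (2 * (z' i - y i))) z :=
      (hasFDerivAt_Gi y α i z).differentiableAt
    have := (hA.hasFDerivAt.fun_add (hB.hasFDerivAt.const_mul ε)).fderiv
    rw [this]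
    simp only [ContinuousLinearMap.add_apply, ContinuousLinearMap.smul_apply, smul_eq_mul]
  unfold lap
  simp only [fderiv_barrier_single]
  rw [Finset.sum_congr rfl (fun i _ => key i), Finset.sum_add_distrib, Finset.mul_sum]

lemma contDiff_barrier : ContDiff ℝ 2 (barrier y α K) := by
  have hq : ContDiff ℝ 2 (qf y) := by
    apply ContDiff.sum
    intro i _
    have hp : ContDiff ℝ 2 (fun z : EuclideanSpace ℝ (Fin n) => z i) :=
      (EuclideanSpace.proj i : EuclideanSpace ℝ (Fin n) →L[ℝ] ℝ).contDiff
    exact (hp.sub contDiff_const).pow 2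
  exact (Real.contDiff_exp.comp ((contDiff_const.mul hq).neg)).sub contDiff_const

end Barrier

lemma lap_sub_const {n : ℕ} (u : EuclideanSpace ℝ (Fin n) → ℝ) (M : ℝ)
    (x : EuclideanSpace ℝ (Fin n)) : lap (fun z => u z - M) x = lap u x := by
  unfold lap
  simp only [fderiv_sub_const]


lemma qf_nonneg {n : ℕ} (y z : EuclideanSpace ℝ (Fin n)) : 0 ≤ qf y z := by
  rw [qf_eq_dist]; positivity

set_option maxHeartbeats 1000000 in
lemma key_open {n : ℕ} (hn : 0 < n) {Ω : Set (EuclideanSpace ℝ (Fin n))}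
    (hΩo : IsOpen Ω)
    {c : EuclideanSpace ℝ (Fin n) → ℝ} (hc_cont : ContinuousOn c Ω)
    (hc : ∀ x ∈ Ω, c x ≤ 0)
    {u : EuclideanSpace ℝ (Fin n) → ℝ} (hu2 : ContDiffOn ℝ 2 u Ω)
    (hLu : ∀ x ∈ Ω, 0 ≤ lap u x + c x * u x)
    {M : ℝ} (hM : 0 ≤ M) (hmax : ∀ x ∈ Ω, u x ≤ M)
    {x : EuclideanSpace ℝ (Fin n)} (hx : x ∈ Ω) (hxM : u x = M) :
    ∃ r > 0, ∀ z ∈ ball x r, z ∈ Ω ∧ u z = M := by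
  haveI : Nontrivial (EuclideanSpace ℝ (Fin n)) := by
    refine ⟨⟨EuclideanSpace.single ⟨0, hn⟩ (1:ℝ), 0, fun h => ?_⟩⟩
    have := congrArg norm h
    rw [EuclideanSpace.norm_single] at this
    simp at this
  obtain ⟨ε₀, hε₀, hball₀⟩ := Metric.isOpen_iff.1 hΩo x hx
  set r := ε₀/4 with hr
  have hrpos : 0 < r := by positivity
  refine ⟨r, hrpos, ?_⟩
  intro y hy
  have h2r : closedBall x (2*r) ⊆ Ω := by
    intro z hz
    rw [mem_closedBall] at hz
    exact hball₀ (mem_ball.2 (by linarith))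
  have hyΩ : y ∈ Ω := hball₀ (mem_ball.2 (by have := mem_ball.1 hy; linarith))
  refine ⟨hyΩ, ?_⟩
  by_contra hyM
  have hylt : u y < M := lt_of_le_of_ne (hmax y hyΩ) hyM
  set F := closedBall x (2*r) ∩ u ⁻¹' {M} with hF
  have hucont : ContinuousOn u Ω := hu2.continuousOn
  have hFclosed : IsClosed F :=
    ContinuousOn.preimage_isClosed_of_isClosed (hucont.mono h2r)
      isClosed_closedBall isClosed_singleton
  have hFcpt : IsCompact F :=
    (isCompact_closedBall x (2*r)).of_isClosed_subset hFclosed inter_subset_left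
  have hxF : x ∈ F := ⟨mem_closedBall_self (by linarith), hxM⟩
  obtain ⟨q, hqF, hq⟩ := hFcpt.exists_infDist_eq_dist ⟨x, hxF⟩ y
  set ρ := infDist y F with hρdef
  have hρr : ρ < r := by
    have h1 : ρ ≤ dist y x := infDist_le_dist_of_mem hxF
    have := mem_ball.1 hy
    linarith
  have hρpos : 0 < ρ := by
    have hne : y ≠ q := fun h => hyM (by rw [h]; exact hqF.2)
    rw [hq]
    exact dist_pos.2 hne
  have hqy : dist q y = ρ := by rw [dist_comm]; exact hq.symm
  have hballρ : ∀ z ∈ closedBall y ρ, z ∈ Ω := by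
    intro z hz
    rw [mem_closedBall] at hz
    apply h2r
    rw [mem_closedBall]
    calc dist z x ≤ dist z y + dist y x := dist_triangle z y x
      _ ≤ 2*r := by have := mem_ball.1 hy; linarith
  have hlt : ∀ z ∈ ball y ρ, u z < M := by
    intro z hz
    have hzΩ : z ∈ Ω := hballρ z (ball_subset_closedBall hz)
    refine lt_of_le_of_ne (hmax z hzΩ) fun hzM => ?_
    have hzF : z ∈ F := by
      refine ⟨?_, hzM⟩
      rw [mem_closedBall]
      calc dist z x ≤ dist z y + dist y x := dist_triangle z y x
        _ ≤ 2*r := by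
            have h1 := mem_ball.1 hz
            have h2 := mem_ball.1 hy
            linarith
    have h3 : ρ ≤ dist y z := infDist_le_dist_of_mem hzF
    have h4 := mem_ball.1 hz
    rw [dist_comm] at h4
    linarith
  clear_value ρ
  set A := closedBall y ρ \ ball y (ρ/2) with hA
  have hAsub : A ⊆ Ω := fun z hz => hballρ z hz.1
  have hAcpt : IsCompact A := (isCompact_closedBall y ρ).diff isOpen_ball
  have hqA : q ∈ A := by
    constructor
    · exact mem_closedBall.2 (le_of_eq hqy)
    · intro h
      rw [mem_ball, hqy] at h
      linarith
  obtain ⟨zc, hzc, hminc⟩ := hAcpt.exists_isMinOn ⟨q, hqA⟩ (hc_cont.mono hAsub)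
  set C := max 0 (-(c zc)) with hCdef
  have hC0 : 0 ≤ C := le_max_left _ _
  have hCb : ∀ z ∈ A, -C ≤ c z := by
    intro z hz
    have h1 : -(c zc) ≤ C := le_max_right _ _
    have h2 : c zc ≤ c z := hminc hz
    linarith
  clear_value C
  set α := (2*n + C + 1 + ρ^2)/ρ^2 with hαdef
  have hα1 : 1 ≤ α := by
    rw [hαdef, le_div_iff₀ (by positivity)]
    have : (0:ℝ) ≤ (n:ℝ) := Nat.cast_nonneg n
    nlinarith
  have hαpos : 0 < α := lt_of_lt_of_le one_pos hα1
  have hαρ : α * ρ^2 = 2*n + C + 1 + ρ^2 := by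
    rw [hαdef]; field_simp
  clear_value α
  set K := Real.exp (-(α * ρ^2)) with hKdef
  have hKpos : 0 < K := Real.exp_pos _
  set b := barrier y α K with hbdef
  have hqfA : ∀ z ∈ A, ρ^2/4 ≤ qf y z ∧ qf y z ≤ ρ^2 := by
    intro z hz
    have h1 : dist z y ≤ ρ := mem_closedBall.1 hz.1
    have h2 : ρ/2 ≤ dist z y := not_lt.1 (fun h => hz.2 (mem_ball.2 h))
    have h0 : 0 ≤ dist z y := dist_nonneg
    rw [qf_eq_dist]
    constructor <;> nlinarith
  have hbpos : ∀ z ∈ closedBall y ρ, 0 ≤ b z := by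
    intro z hz
    have h1 : qf y z ≤ ρ^2 := by
      rw [qf_eq_dist]
      have := mem_closedBall.1 hz
      nlinarith [dist_nonneg (x := z) (y := y)]
    rw [hbdef]
    unfold barrier
    rw [hKdef, sub_nonneg, Real.exp_le_exp]
    nlinarith
  have hble : ∀ z, b z ≤ Real.exp (-(α * qf y z)) := by
    intro z
    rw [hbdef]
    unfold barrier
    exact sub_le_self _ hKpos.le
  have hb1 : ∀ z, b z ≤ 1 := by
    intro z
    refine le_trans (hble z) (Real.exp_le_one_iff.2 ?_)
    have := qf_nonneg y z
    nlinarith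
  have hlapb : ∀ z ∈ A, 0 < lap b z + c z * b z := by
    intro z hz
    obtain ⟨hq1, hq2⟩ := hqfA z hz
    have hE : 0 < Real.exp (-(α * qf y z)) := Real.exp_pos _
    have h1 : lap b z = Real.exp (-(α * qf y z)) * (4*α^2 * qf y z - 2*α*n) :=
      lap_barrier y α K z
    have h2 : -C * b z ≤ c z * b z :=
      mul_le_mul_of_nonneg_right (hCb z hz) (hbpos z hz.1)
    have h3 : -C * Real.exp (-(α * qf y z)) ≤ -C * b z :=
      mul_le_mul_of_nonpos_left (hble z) (neg_nonpos.2 hC0)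
    have hkey : 2*α*(n:ℝ) + C < 4*α^2 * qf y z := by
      have hm1 : α * (α * ρ^2) = α * (2*n + C + 1 + ρ^2) := by rw [hαρ]
      have hm2 : α^2 * (ρ^2/4) ≤ α^2 * qf y z :=
        mul_le_mul_of_nonneg_left hq1 (by positivity)
      have hm3 : C ≤ α * C := le_mul_of_one_le_left hC0 hα1
      have hm4 : 0 < α * ρ^2 := by positivity
      have hm5 : (0:ℝ) ≤ (n:ℝ) := Nat.cast_nonneg n
      have hm2' : α^2*ρ^2 ≤ 4*(α^2 * qf y z) := by linarith
      nlinarith [hm1, hm2', hm3, hm4, hα1]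
    have h4 : 0 < Real.exp (-(α * qf y z)) * (4*α^2 * qf y z - 2*α*n - C) :=
      mul_pos hE (by linarith)
    nlinarith
  have hsne : (sphere y (ρ/2)).Nonempty := NormedSpace.sphere_nonempty.2 (by linarith)
  have hsphsub : sphere y (ρ/2) ⊆ ball y ρ := fun z hz =>
    mem_ball.2 (by rw [mem_sphere.1 hz]; linarith)
  have hsphΩ : sphere y (ρ/2) ⊆ Ω := fun z hz =>
    hballρ z (ball_subset_closedBall (hsphsub hz))
  obtain ⟨zs, hzs, hmaxS⟩ := (isCompact_sphere y (ρ/2)).exists_isMaxOn hsne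
    (hucont.mono hsphΩ)
  set δ := M - u zs with hδdef
  have hδpos : 0 < δ := sub_pos.2 (hlt zs (hsphsub hzs))
  set ε := δ/2 with hεdef
  have hεpos : 0 < ε := by positivity
  set w := fun z => (u z - M) + ε * b z with hwdef
  have hbarcont : Continuous (barrier y α K) := (contDiff_barrier y α K).continuous
  have hwcont : ContinuousOn w A :=
    ((hucont.mono hAsub).sub continuousOn_const).add
      (continuousOn_const.mul (hbarcont.continuousOn))
  obtain ⟨zst, hzstA, hzstmax⟩ := hAcpt.exists_isMaxOn ⟨q, hqA⟩ hwcont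
  have hzstΩ : zst ∈ Ω := hAsub hzstA
  have hbq : b q = 0 := by
    rw [hbdef]
    unfold barrier
    rw [qf_eq_dist, hqy, hKdef, sub_self]
  have hwq : w q = 0 := by
    rw [hwdef]
    simp only
    rw [hqF.2, hbq]
    ring
  have hwst : 0 ≤ w zst := hwq ▸ hzstmax hqA
  have hd1 : dist zst y ≤ ρ := mem_closedBall.1 hzstA.1
  have hd2 : ρ/2 ≤ dist zst y := not_lt.1 (fun h => hzstA.2 (mem_ball.2 h))
  rcases eq_or_lt_of_le hd2 with hmid | hd2'
  · -- zst on inner sphere: contradiction with w zst ≥ 0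
    have hzsS : zst ∈ sphere y (ρ/2) := mem_sphere.2 hmid.symm
    have h1 : u zst ≤ u zs := hmaxS hzsS
    have h2 : ε * b zst ≤ ε := by nlinarith [hb1 zst]
    have h3 : w zst = (u zst - M) + ε * b zst := rfl
    rw [h3] at hwst
    rw [hεdef] at h2 hwst
    rw [hδdef] at h2 hwst
    linarith
  rcases lt_or_eq_of_le hd1 with hlt' | houter
  · -- interior case
    have hU : IsOpen (ball y ρ \ closedBall y (ρ/2)) :=
      isOpen_ball.sdiff isClosed_closedBall
    have hzstU : zst ∈ ball y ρ \ closedBall y (ρ/2) :=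
      ⟨mem_ball.2 hlt', fun h => absurd (mem_closedBall.1 h) (not_le.2 hd2')⟩
    have hUsub : (ball y ρ \ closedBall y (ρ/2)) ⊆ A := fun z hz =>
      ⟨ball_subset_closedBall hz.1, fun h => hz.2 (ball_subset_closedBall h)⟩
    have hwC2 : ContDiffOn ℝ 2 w (ball y ρ \ closedBall y (ρ/2)) :=
      ((hu2.mono (fun z hz => hAsub (hUsub hz))).sub contDiffOn_const).add
        ((contDiff_const.mul (contDiff_barrier y α K)).contDiffOn)
    have hlap_nonpos : lap w zst ≤ 0 :=
      lap_nonpos_of_max hU hzstU hwC2 (fun z hz => hzstmax (hUsub hz))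
    have hsplit : lap w zst = lap (fun z => u z - M) zst + ε * lap b zst :=
      lap_add_barrier y α K ε hΩo hzstΩ (hu2.sub contDiffOn_const)
    rw [lap_sub_const] at hsplit
    have hLust := hLu zst hzstΩ
    have hlapbst := hlapb zst hzstA
    have hcw : c zst * w zst ≤ 0 :=
      mul_nonpos_iff.2 (Or.inr ⟨hc zst hzstΩ, hwst⟩)
    have hcM : 0 ≤ -(c zst) * M := mul_nonneg (neg_nonneg.2 (hc zst hzstΩ)) hM
    have hwz : w zst = u zst - M + ε * b zst := rfl
    rw [hwz] at hcw
    have hscaled : 0 < ε * (lap b zst + c zst * b zst) := mul_pos hεpos hlapbst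
    nlinarith
  · -- outer sphere case: Hopf boundary argument
    have hbzst : b zst = 0 := by
      rw [hbdef]
      unfold barrier
      rw [qf_eq_dist, houter, hKdef, sub_self]
    have hwzst : w zst = u zst - M := by
      rw [hwdef]; simp only; rw [hbzst]; ring
    have huzst : u zst = M := by
      rw [hwzst] at hwst
      have := hmax zst hzstΩ
      linarith
    have hloc : IsLocalMax u zst := by
      filter_upwards [hΩo.mem_nhds hzstΩ] with z hz
      rw [huzst]
      exact hmax z hz
    have hgrad : fderiv ℝ u zst = 0 := hloc.fderiv_eq_zero
    set d := ρ⁻¹ • (zst - y) with hddef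
    have hdnorm : ‖d‖ = 1 := by
      rw [hddef, norm_smul, Real.norm_eq_abs, abs_of_pos (by positivity),
        ← dist_eq_norm, houter]
      exact inv_mul_cancel₀ hρpos.ne'
    have hyd : y + ρ • d = zst := by
      rw [hddef, smul_smul, mul_inv_cancel₀ hρpos.ne', one_smul]
      abel
    set L : ℝ → EuclideanSpace ℝ (Fin n) := fun t => y + t • d with hLdef
    have hLd : ∀ t, HasDerivAt L d t := fun t => by
      have := ((hasDerivAt_id t).smul_const d).const_add y; rw [one_smul] at this; exact this
    have hLρ : L ρ = zst := hyd
    have hLmem : ∀ t ∈ Icc (ρ/2) ρ, L t ∈ A := by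
      intro t ht
      have hdist : dist (L t) y = t := by
        rw [hLdef]
        simp only
        rw [dist_eq_norm, add_sub_cancel_left, norm_smul, hdnorm, mul_one,
          Real.norm_eq_abs, abs_of_nonneg (by linarith [ht.1])]
      constructor
      · exact mem_closedBall.2 (by rw [hdist]; exact ht.2)
      · intro h
        rw [mem_ball, hdist] at h
        linarith [ht.1]
    have hud : DifferentiableAt ℝ u zst :=
      (hu2.differentiableOn (by norm_num)).differentiableAt (hΩo.mem_nhds hzstΩ)
    have hvd : HasFDerivAt (fun z => u z - M)
        (0 : EuclideanSpace ℝ (Fin n) →L[ℝ] ℝ) zst := by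
      have := hud.hasFDerivAt.sub_const M
      rwa [hgrad] at this
    have hwd : HasFDerivAt w
        (ε • ((-α * Real.exp (-(α * qf y zst))) • Dq y zst)) zst := by
      have := hvd.add ((hasFDerivAt_barrier y α K zst).const_mul ε)
      rw [zero_add] at this; exact this
    have hwd' : HasFDerivAt w
        (ε • ((-α * Real.exp (-(α * qf y zst))) • Dq y zst)) (L ρ) := by
      rw [hLρ]; exact hwd
    have hg : HasDerivAt (fun t => w (L t))
        ((ε • ((-α * Real.exp (-(α * qf y zst))) • Dq y zst)) d) ρ :=
      hwd'.comp_hasDerivAt ρ (hLd ρ)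
    have hge : 0 ≤ (ε • ((-α * Real.exp (-(α * qf y zst))) • Dq y zst)) d := by
      refine deriv_nonneg_of_isMaxOn_right (show ρ/2 < ρ by linarith) ?_ hg
      intro t ht
      show w (L t) ≤ w (L ρ)
      rw [hLρ]
      exact hzstmax (hLmem t ht)
    have hDqd : Dq y zst d = 2 * ρ := by
      rw [Dq_apply]
      have hdc : ∀ i, d i = ρ⁻¹ * (zst i - y i) := by
        intro i
        rw [hddef]
        simp [PiLp.smul_apply, PiLp.sub_apply, smul_eq_mul]
      have hsum : ∑ i, 2*(zst i - y i) * d i = 2*ρ⁻¹ * qf y zst := by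
        unfold qf
        rw [Finset.mul_sum]
        apply Finset.sum_congr rfl
        intro i _
        rw [hdc i]
        ring
      rw [hsum, qf_eq_dist, houter]
      field_simp
    have hval : (ε • ((-α * Real.exp (-(α * qf y zst))) • Dq y zst)) d
        = ε * ((-α * Real.exp (-(α * qf y zst))) * (2*ρ)) := by
      rw [ContinuousLinearMap.smul_apply, ContinuousLinearMap.smul_apply, hDqd]
      simp [smul_eq_mul]
    rw [hval] at hge
    have hneg : 0 < ε * (α * Real.exp (-(α * qf y zst)) * (2*ρ)) := by positivity
    nlinarith [hneg]

/-- Strong maximum principle for L = Δ + c·I with c ≤ 0: if u satisfies Lu ≥ 0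
on a connected bounded open set Ω and attains a nonnegative maximum at an
interior point, then u is constant on Ω. -/
theorem strong_max_principle_c_nonpos {n : ℕ} (Ω : Set (EuclideanSpace ℝ (Fin n)))
    (hΩo : IsOpen Ω) (hΩc : IsConnected Ω) (hΩb : Bornology.IsBounded Ω)
    (c : EuclideanSpace ℝ (Fin n) → ℝ) (hc_cont : ContinuousOn c Ω)
    (hc : ∀ x ∈ Ω, c x ≤ 0)
    (u : EuclideanSpace ℝ (Fin n) → ℝ) (hu2 : ContDiffOn ℝ 2 u Ω)
    (hLu : ∀ x ∈ Ω, 0 ≤ lap u x + c x * u x)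
    (x₀ : EuclideanSpace ℝ (Fin n)) (hx₀ : x₀ ∈ Ω)
    (hmax : ∀ x ∈ Ω, u x ≤ u x₀) (hnn : 0 ≤ u x₀) :
    ∀ x ∈ Ω, u x = u x₀ := by
  rcases Nat.eq_zero_or_pos n with hn0 | hn
  · intro x hx
    have hxx : x = x₀ := by
      subst hn0
      exact PiLp.ext fun i => Fin.elim0 i
    rw [hxx]
  set M := u x₀ with hM
  by_contra hcon
  push_neg at hcon
  obtain ⟨x₁, hx₁Ω, hx₁⟩ := hcon
  set U : Set (EuclideanSpace ℝ (Fin n)) := {z | z ∈ Ω ∧ u z = M} with hU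
  have hUopen : IsOpen U := by
    rw [Metric.isOpen_iff]
    rintro z ⟨hzΩ, hzM⟩
    obtain ⟨r, hr, hball⟩ := key_open hn hΩo hc_cont hc hu2 hLu hnn hmax hzΩ hzM
    exact ⟨r, hr, fun z' hz' => (hball z' hz')⟩
  set V : Set (EuclideanSpace ℝ (Fin n)) := Ω ∩ u ⁻¹' (Iio M) with hV
  have hVopen : IsOpen V :=
    hu2.continuousOn.isOpen_inter_preimage hΩo isOpen_Iio
  have hcover : Ω ⊆ U ∪ V := by
    intro z hz
    rcases eq_or_lt_of_le (hmax z hz) with h | h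
    · exact Or.inl ⟨hz, h⟩
    · exact Or.inr ⟨hz, h⟩
  have hUne : (Ω ∩ U).Nonempty := ⟨x₀, hx₀, hx₀, rfl⟩
  have hVne : (Ω ∩ V).Nonempty :=
    ⟨x₁, hx₁Ω, hx₁Ω, lt_of_le_of_ne (hmax x₁ hx₁Ω) hx₁⟩
  obtain ⟨z, _, ⟨_, hz1⟩, ⟨_, hz2⟩⟩ :=
    hΩc.isPreconnected U V hUopen hVopen hcover hUne hVne
  rw [mem_preimage, mem_Iio] at hz2
  rw [hz1] at hz2
  exact lt_irrefl _ hz2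
end
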